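/- arXiv:1811.12429 — 5 statements merged into one kernel-verified Lean document; each statement's English description precedes it below -/
import Mathlib

section
/- Let xs < xt be integers, C ≥ 0 a real number, and f : ℤ → ℝ a function satisfying the Ameso(C) condition on [xs,xt]. Suppose there exist x0 ∈ [xs,xt] and a positive integer b with x0 + b ≤ xt such that (a) f(x0) = min over y ∈ [xs, x0+b] of f(y), and (b) f(x0) + C ≤ max over y ∈ [x0, x0+b] of f(y). Then f(x0) = min over y ∈ [xs, xt] of f(y). -/
/-- Ceiling of `(x+y)/2` as a rational. -/
def mceil (x y : ℤ) : ℤ := ⌈((x : ℚ) + (y : ℚ)) / 2⌉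

/-- Floor of `(x+y)/2` as a rational. -/
def mfloor (x y : ℤ) : ℤ := ⌊((x : ℚ) + (y : ℚ)) / 2⌋

lemma mceil_eq_of_sum (x y M : ℤ) (h : x + y = 2 * M) : mceil x y = M := by
  unfold mceil
  have : ((x : ℚ) + (y : ℚ)) / 2 = (M : ℚ) := by
    have : ((x : ℚ) + y) = 2 * M := by exact_mod_cast congrArg (fun z : ℤ => (z : ℚ)) h
    rw [this]; ring
  rw [this, Int.ceil_intCast]

lemma mfloor_eq_of_sum (x y M : ℤ) (h : x + y = 2 * M) : mfloor x y = M := by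
  unfold mfloor
  have : ((x : ℚ) + (y : ℚ)) / 2 = (M : ℚ) := by
    have : ((x : ℚ) + y) = 2 * M := by exact_mod_cast congrArg (fun z : ℤ => (z : ℚ)) h
    rw [this]; ring
  rw [this, Int.floor_intCast]

/-- Theorem 1 (global optimizer, right): if `f(x0)` is the minimum of `f` on `[xs, x0+b]`
and `f(x0) + C ≤ max_{[x0, x0+b]} f`, then `f(x0)` is the minimum of `f` on `[xs, xt]`. -/
theorem ameso_global_optimizer_right
    (xs xt : ℤ) (hxst : xs < xt) (C : ℝ) (hC : 0 ≤ C) (f : ℤ → ℝ)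
    (hAmeso : ∀ x ∈ Finset.Icc xs xt, ∀ y ∈ Finset.Icc xs xt,
      f x + f y + C ≥ f (mceil x y) + f (mfloor x y))
    (x0 : ℤ) (hx0l : xs ≤ x0) (hx0r : x0 ≤ xt)
    (b : ℤ) (hb : 0 < b) (hbt : x0 + b ≤ xt)
    (hmin : f x0 = (Finset.Icc xs (x0 + b)).inf' (Finset.nonempty_Icc.2 (by omega)) f)
    (hmax : f x0 + C ≤ (Finset.Icc x0 (x0 + b)).sup' (Finset.nonempty_Icc.2 (by omega)) f) :
    f x0 = (Finset.Icc xs xt).inf' (Finset.nonempty_Icc.2 (by omega)) f := by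
  -- f x0 is ≤ f z on the window [xs, x0+b]
  have hwin : ∀ z, xs ≤ z → z ≤ x0 + b → f x0 ≤ f z := by
    intro z h1 h2
    rw [hmin]
    exact Finset.inf'_le f (Finset.mem_Icc.2 ⟨h1, h2⟩)
  -- key claim: f x0 ≤ f y for all y ∈ [xs, xt]
  have key : ∀ y ∈ Finset.Icc xs xt, f x0 ≤ f y := by
    intro y hy
    rw [Finset.mem_Icc] at hy
    by_cases hyb : y ≤ x0 + b
    · exact hwin y hy.1 hyb
    push_neg at hyb
    -- y > x0 + b
    have hTne : (Finset.Icc x0 (y - 1)).Nonempty := Finset.nonempty_Icc.2 (by omega)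
    set T : Finset ℤ := Finset.Icc x0 (y - 1) with hT
    set FM : ℝ := T.sup' hTne f with hFM
    -- the set of maximizers is nonempty
    obtain ⟨w, hwT, hwEq⟩ := Finset.exists_mem_eq_sup' hTne f
    have hAne : (T.filter (fun z => f z = FM)).Nonempty :=
      ⟨w, Finset.mem_filter.2 ⟨hwT, hwEq.symm⟩⟩
    set M : ℤ := (T.filter (fun z => f z = FM)).max' hAne with hM
    have hMmem : M ∈ T.filter (fun z => f z = FM) := Finset.max'_mem _ hAne
    have hMT : M ∈ T := (Finset.mem_filter.1 hMmem).1
    have hMf : f M = FM := (Finset.mem_filter.1 hMmem).2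
    have hMbounds : x0 ≤ M ∧ M ≤ y - 1 := Finset.mem_Icc.1 hMT
    have hle : ∀ z, x0 ≤ z → z ≤ y - 1 → f z ≤ FM := by
      intro z h1 h2
      exact Finset.le_sup' f (Finset.mem_Icc.2 ⟨h1, h2⟩)
    have hlt : ∀ z, M < z → z ≤ y - 1 → f z < FM := by
      intro z h1 h2
      rcases lt_or_eq_of_le (hle z (by omega) h2) with h | h
      · exact h
      · exfalso
        have hzA : z ∈ T.filter (fun w => f w = FM) :=
          Finset.mem_filter.2 ⟨Finset.mem_Icc.2 ⟨by omega, h2⟩, h⟩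
        have := Finset.le_max' _ z hzA
        omega
    -- FM ≥ f x0 + C via the window max point m
    obtain ⟨m, hmMem, hmEq⟩ :=
      Finset.exists_mem_eq_sup' (Finset.nonempty_Icc.2 (show x0 ≤ x0 + b by omega)) f
    rw [Finset.mem_Icc] at hmMem
    have hFMC : f x0 + C ≤ FM := by
      have h1 : f x0 + C ≤ f m := hmax.trans (le_of_eq hmEq)
      exact h1.trans (hle m hmMem.1 (by omega))
    -- M > x0
    have hMx0 : x0 < M := by
      rcases lt_or_eq_of_le hMbounds.1 with h | h
      · exact h
      · exfalso
        have h1 : f (x0 + 1) < FM := hlt (x0 + 1) (by omega) (by omega)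
        have h2 : f x0 ≤ f (x0 + 1) := hwin (x0 + 1) (by omega) (by omega)
        have h3 : FM = f x0 := by rw [← hMf, ← h]
        linarith
    -- 2M - x0 ≥ y
    have hrefl : y ≤ 2 * M - x0 := by
      by_contra hcon
      push_neg at hcon
      set v : ℤ := 2 * M - x0 with hv
      have hvT : x0 ≤ v ∧ v ≤ y - 1 := by omega
      have hAm := hAmeso x0 (Finset.mem_Icc.2 ⟨hx0l, hx0r⟩) v
        (Finset.mem_Icc.2 ⟨by omega, by omega⟩)
      rw [mceil_eq_of_sum x0 v M (by omega), mfloor_eq_of_sum x0 v M (by omega), hMf] at hAm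
      have hvlt : f v < FM := hlt v (by omega) hvT.2
      linarith
    -- reflect y through M
    set x : ℤ := 2 * M - y with hx
    have hxb : x0 ≤ x ∧ x ≤ y - 2 := by omega
    have hAm := hAmeso x (Finset.mem_Icc.2 ⟨by omega, by omega⟩) y
      (Finset.mem_Icc.2 ⟨by omega, by omega⟩)
    rw [mceil_eq_of_sum x y M (by omega), mfloor_eq_of_sum x y M (by omega), hMf] at hAm
    have hxle : f x ≤ FM := hle x hxb.1 (by omega)
    linarith
  -- conclude
  apply le_antisymm
  · exact Finset.le_inf' _ _ key
  · exact Finset.inf'_le f (Finset.mem_Icc.2 ⟨hx0l, hx0r⟩)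
end

section
/- Let xs < xt be integers, C ≥ 0 a real number, and f : ℤ → ℝ a function satisfying the Ameso(C) condition on [xs,xt]. Suppose there exist x0 ∈ [xs,xt] and positive integers b1, b2 with xs ≤ x0 − b2 and x0 + b1 ≤ xt such that (a) f(x0) = min over y ∈ [x0−b2, x0+b1] of f(y), (b) f(x0) + C ≤ max over y ∈ [x0, x0+b1] of f(y), and (c) f(x0) + C ≤ max over y ∈ [x0−b2, x0] of f(y). Then f(x0) = min over y ∈ [xs, xt] of f(y). -/
lemma mid_eq_ceil (a b M : ℤ) (h : a + b = 2*M) : mceil a b = M := by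
  unfold mceil
  have : ((a:ℚ) + b) / 2 = (M:ℚ) := by
    have : ((a:ℚ) + b) = 2*M := by exact_mod_cast congrArg (Int.cast : ℤ → ℚ) h
    rw [this]; ring
  rw [this, Int.ceil_intCast]

lemma mid_eq_floor (a b M : ℤ) (h : a + b = 2*M) : mfloor a b = M := by
  unfold mfloor
  have : ((a:ℚ) + b) / 2 = (M:ℚ) := by
    have : ((a:ℚ) + b) = 2*M := by exact_mod_cast congrArg (Int.cast : ℤ → ℚ) h
    rw [this]; ring
  rw [this, Int.floor_intCast]

lemma ameso_keyM (C : ℝ) (hC : 0 ≤ C) (f : ℤ → ℝ) (x0 x' : ℤ) (h2 : x0 + 2 ≤ x')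
    (hAm : ∀ x, x0 ≤ x → x ≤ x' → ∀ y, x0 ≤ y → y ≤ x' →
      f x + f y + C ≥ f (mceil x y) + f (mfloor x y))
    (hlow : ∀ z, x0 ≤ z → z < x' → f x0 ≤ f z)
    (hx' : f x' < f x0) :
    ∀ n : ℕ, ∀ M : ℤ, x' - M ≤ (n:ℤ) → x0 ≤ M → M ≤ x' - 1 →
      (∀ z, x0 ≤ z → z ≤ x' - 1 → f z ≤ f M) → f x0 + C ≤ f M → False := by
  intro n
  induction n with
  | zero => intro M h1 h2' h3 _ _; omega
  | succ n ih =>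
    intro M hn hMl hMr hMmax hMC
    rcases lt_or_ge M (x0+1) with hM0 | hM0
    · -- M = x0
      have hMx0 : M = x0 := by omega
      have hCle : C ≤ 0 := by
        have := hMmax x0 le_rfl (by omega)
        rw [hMx0] at hMC; linarith
      have hA := hAm (x'-2) (by omega) (by omega) x' (by omega) le_rfl
      rw [mid_eq_ceil (x'-2) x' (x'-1) (by ring), mid_eq_floor (x'-2) x' (x'-1) (by ring)] at hA
      have h1 : f (x'-2) ≤ f M := hMmax _ (by omega) (by omega)
      have h2' : f x0 ≤ f (x'-1) := hlow _ (by omega) (by omega)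
      rw [hMx0] at h1
      linarith
    · rcases le_or_gt (x0 + x') (2*M) with hrefl | hrefl
      · -- reflect x' about M : a = 2M - x'
        have hA := hAm (2*M - x') (by omega) (by omega) x' (by omega) le_rfl
        rw [mid_eq_ceil (2*M-x') x' M (by ring), mid_eq_floor (2*M-x') x' M (by ring)] at hA
        have h1 : f (2*M - x') ≤ f M := hMmax _ (by omega) (by omega)
        linarith
      · -- reflect x0 about M : b = 2M - x0 is a farther maximizer
        have hA := hAm x0 le_rfl (by omega) (2*M - x0) (by omega) (by omega)
        rw [mid_eq_ceil x0 (2*M-x0) M (by ring), mid_eq_floor x0 (2*M-x0) M (by ring)] at hA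
        have hb : f (2*M - x0) ≤ f M := hMmax _ (by omega) (by omega)
        have hbM : f M ≤ f (2*M - x0) := by linarith
        exact ih (2*M - x0) (by omega) (by omega) (by omega)
          (fun z hz1 hz2 => le_trans (hMmax z hz1 hz2) hbM) (le_trans hMC hbM)

lemma ameso_key (C : ℝ) (hC : 0 ≤ C) (f : ℤ → ℝ) (x0 x' : ℤ) (h2 : x0 + 2 ≤ x')
    (hAm : ∀ x, x0 ≤ x → x ≤ x' → ∀ y, x0 ≤ y → y ≤ x' →
      f x + f y + C ≥ f (mceil x y) + f (mfloor x y))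
    (hlow : ∀ z, x0 ≤ z → z < x' → f x0 ≤ f z)
    (hx' : f x' < f x0)
    (u : ℤ) (hu1 : x0 ≤ u) (hu2 : u < x') (huC : f x0 + C ≤ f u) : False := by
  obtain ⟨M, hM, hMmax⟩ := (Finset.Icc x0 (x'-1)).exists_max_image f
    ⟨x0, Finset.mem_Icc.2 ⟨le_rfl, by omega⟩⟩
  rw [Finset.mem_Icc] at hM
  refine ameso_keyM C hC f x0 x' h2 hAm hlow hx' (x' - M).toNat M (by omega) hM.1 hM.2
    (fun z hz1 hz2 => hMmax z (Finset.mem_Icc.2 ⟨hz1, hz2⟩)) ?_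
  exact le_trans huC (hMmax u (Finset.mem_Icc.2 ⟨hu1, by omega⟩))
lemma mceil_neg (x y : ℤ) : mceil (-x) (-y) = -(mfloor x y) := by
  unfold mceil mfloor
  push_cast
  rw [show (-(x:ℚ) + -y)/2 = -(((x:ℚ)+y)/2) by ring, Int.ceil_neg]

lemma mfloor_neg (x y : ℤ) : mfloor (-x) (-y) = -(mceil x y) := by
  unfold mceil mfloor
  push_cast
  rw [show (-(x:ℚ) + -y)/2 = -(((x:ℚ)+y)/2) by ring, Int.floor_neg]

/-- Theorem 3 (local minimum with two-sided conditions is the global minimum). -/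
theorem ameso_global_optimizer_two_sided
    (xs xt : ℤ) (hxst : xs < xt) (C : ℝ) (hC : 0 ≤ C) (f : ℤ → ℝ)
    (hAmeso : ∀ x ∈ Finset.Icc xs xt, ∀ y ∈ Finset.Icc xs xt,
      f x + f y + C ≥ f (mceil x y) + f (mfloor x y))
    (x0 : ℤ) (hx0l : xs ≤ x0) (hx0r : x0 ≤ xt)
    (b1 b2 : ℤ) (hb1 : 0 < b1) (hb2 : 0 < b2)
    (hbs : xs ≤ x0 - b2) (hbt : x0 + b1 ≤ xt)
    (hmin : f x0 = (Finset.Icc (x0 - b2) (x0 + b1)).inf' (Finset.nonempty_Icc.2 (by omega)) f)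
    (hmaxr : f x0 + C ≤ (Finset.Icc x0 (x0 + b1)).sup' (Finset.nonempty_Icc.2 (by omega)) f)
    (hmaxl : f x0 + C ≤ (Finset.Icc (x0 - b2) x0).sup' (Finset.nonempty_Icc.2 (by omega)) f) :
    f x0 = (Finset.Icc xs xt).inf' (Finset.nonempty_Icc.2 (by omega)) f := by
  -- local minimality
  have hloc : ∀ z, x0 - b2 ≤ z → z ≤ x0 + b1 → f x0 ≤ f z := by
    intro z h1 h2
    rw [hmin]
    exact Finset.inf'_le f (Finset.mem_Icc.2 ⟨h1, h2⟩)
  -- it suffices to show global lower bound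
  have main : ∀ z, xs ≤ z → z ≤ xt → f x0 ≤ f z := by
    by_contra hcon
    push_neg at hcon
    obtain ⟨y, hy1, hy2, hy3⟩ := hcon
    rcases lt_or_ge x0 y with hside | hside
    · -- counterexample on the right
      set S := (Finset.Icc x0 xt).filter (fun z => f z < f x0) with hS
      have hyS : y ∈ S := Finset.mem_filter.2 ⟨Finset.mem_Icc.2 ⟨le_of_lt hside, hy2⟩, hy3⟩
      set x' := S.min' ⟨y, hyS⟩ with hx'def
      have hx'S := S.min'_mem ⟨y, hyS⟩
      rw [Finset.mem_filter, Finset.mem_Icc] at hx'S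
      obtain ⟨⟨hx'1, hx'2⟩, hx'3⟩ := hx'S
      have hmin' : ∀ w ∈ S, x' ≤ w := fun w hw => S.min'_le w hw
      have hlow : ∀ z, x0 ≤ z → z < x' → f x0 ≤ f z := by
        intro z h1 h2
        by_contra h
        push_neg at h
        have : z ∈ S := Finset.mem_filter.2 ⟨Finset.mem_Icc.2 ⟨h1, by omega⟩, h⟩
        exact absurd (hmin' z this) (by omega)
      have hfar : x0 + b1 < x' := by
        by_contra h
        push_neg at h
        exact absurd (hloc x' (by omega) h) (by linarith)
      obtain ⟨u, hu, hufeq⟩ := Finset.exists_mem_eq_sup' (Finset.nonempty_Icc.2 (by omega) :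
        (Finset.Icc x0 (x0+b1)).Nonempty) f
      rw [Finset.mem_Icc] at hu
      refine ameso_key C hC f x0 x' (by omega) ?_ hlow hx'3 u hu.1 (by omega) (by rw [hufeq] at hmaxr; exact hmaxr)
      intro a ha1 ha2 b hb1' hb2'
      exact hAmeso a (Finset.mem_Icc.2 ⟨by omega, by omega⟩) b (Finset.mem_Icc.2 ⟨by omega, by omega⟩)
    · -- counterexample on the left: mirror with z ↦ f (-z)
      set S := (Finset.Icc xs x0).filter (fun z => f z < f x0) with hS
      have hyS : y ∈ S := Finset.mem_filter.2 ⟨Finset.mem_Icc.2 ⟨hy1, hside⟩, hy3⟩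
      set xL := S.max' ⟨y, hyS⟩ with hxLdef
      have hxLS := S.max'_mem ⟨y, hyS⟩
      rw [Finset.mem_filter, Finset.mem_Icc] at hxLS
      obtain ⟨⟨hxL1, hxL2⟩, hxL3⟩ := hxLS
      have hmax' : ∀ w ∈ S, w ≤ xL := fun w hw => S.le_max' w hw
      have hlow : ∀ z, xL < z → z ≤ x0 → f x0 ≤ f z := by
        intro z h1 h2
        by_contra h
        push_neg at h
        have : z ∈ S := Finset.mem_filter.2 ⟨Finset.mem_Icc.2 ⟨by omega, h2⟩, h⟩
        exact absurd (hmax' z this) (by omega)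
      have hfar : xL < x0 - b2 := by
        by_contra h
        push_neg at h
        exact absurd (hloc xL h (by omega)) (by linarith)
      obtain ⟨u, hu, hufeq⟩ := Finset.exists_mem_eq_sup' (Finset.nonempty_Icc.2 (by omega) :
        (Finset.Icc (x0-b2) x0).Nonempty) f
      rw [Finset.mem_Icc] at hu
      refine ameso_key C hC (fun z => f (-z)) (-x0) (-xL) (by omega) ?_ ?_ ?_ (-u)
        (by omega) (by omega) ?_
      · intro a ha1 ha2 b hb1' hb2'
        have h := hAmeso (-a) (Finset.mem_Icc.2 ⟨by omega, by omega⟩) (-b)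
          (Finset.mem_Icc.2 ⟨by omega, by omega⟩)
        simp only [mceil_neg, mfloor_neg] at h
        show f (-a) + f (-b) + C ≥ f (-mceil a b) + f (-mfloor a b)
        linarith
      · intro z h1 h2
        simp only [neg_neg]
        exact hlow (-z) (by omega) (by omega)
      · simp only [neg_neg]; exact hxL3
      · simp only [neg_neg]; rw [hufeq] at hmaxl; exact hmaxl
  apply le_antisymm
  · exact Finset.le_inf' _ _ (fun z hz => by
      rw [Finset.mem_Icc] at hz; exact main z hz.1 hz.2)
  · exact Finset.inf'_le f (Finset.mem_Icc.2 ⟨hx0l, hx0r⟩)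
end

section
/- Let W, w1, w2, w3, c1, c2, c3 be positive integers with w1 < w2 < w3, c1 < c2 < c3, and c1/w1 > c2/w2 > c3/w3 (as rational numbers). Define the cost K : ℤ × ℤ → ℤ by K(z1, z2) = c1·z1 + c2·z2 + c3·⌈(W − w1·z1 − w2·z2)/w3⌉, where ⌈·⌉ is the ceiling of the rational argument, and let D = {(z1, z2) ∈ ℤ × ℤ : z1 ≥ 0, z2 ≥ 0, 2·w1·z1 ≤ W, 2·w2·z2 ≤ W}. Then: (i) for all (z1,z2), (z1',z2') ∈ D, the points (⌈(z1+z1')/2⌉, ⌈(z2+z2')/2⌉) and (⌊(z1+z1')/2⌋, ⌊(z2+z2')/2⌋) belong to D; and (ii) for all (z1,z2), (z1',z2') ∈ D, K(z1,z2) + K(z1',z2') + c3 ≥ K(⌈(z1+z1')/2⌉, ⌈(z2+z2')/2⌉) + K(⌊(z1+z1')/2⌋, ⌊(z2+z2')/2⌋). In other words, minimizing K over D is an Ameso(c3) optimization problem. -/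
/-- The shipping cost `K(z1, z2) = c1 z1 + c2 z2 + c3 ⌈(W - w1 z1 - w2 z2)/w3⌉`. -/
def shipCost (W w1 w2 w3 c1 c2 c3 z1 z2 : ℤ) : ℤ :=
  c1 * z1 + c2 * z2 + c3 * ⌈((W : ℚ) - (w1 : ℚ) * (z1 : ℚ) - (w2 : ℚ) * (z2 : ℚ)) / (w3 : ℚ)⌉

/-- The feasible region `D = {(z1, z2) : z1 ≥ 0, z2 ≥ 0, 2 w1 z1 ≤ W, 2 w2 z2 ≤ W}`. -/
def shipDom (W w1 w2 : ℤ) (z1 z2 : ℤ) : Prop :=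
  0 ≤ z1 ∧ 0 ≤ z2 ∧ 2 * w1 * z1 ≤ W ∧ 2 * w2 * z2 ≤ W

lemma mfloor_eq (x y : ℤ) : mfloor x y = (x + y) / 2 := by
  have : ((x : ℚ) + y) / 2 = ((x + y : ℤ) : ℚ) / ((2 : ℕ) : ℚ) := by push_cast; ring
  rw [mfloor, this, Rat.floor_intCast_div_natCast]; norm_num

lemma mceil_eq (x y : ℤ) : mceil x y = -((-(x + y)) / 2) := by
  have : ((x : ℚ) + y) / 2 = -(((-(x + y) : ℤ) : ℚ) / ((2 : ℕ) : ℚ)) := by push_cast; ring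
  rw [mceil, this, Int.ceil_neg, Rat.floor_intCast_div_natCast]; norm_num

lemma dom_bound (w Wv x y t : ℤ) (hw : 0 < w) (hx : 2 * w * x ≤ Wv)
    (hy : 2 * w * y ≤ Wv) (h : t ≤ x ∨ t ≤ y) : 2 * w * t ≤ Wv := by
  rcases h with h | h <;> nlinarith

lemma ceil_key (S S' T T' : ℚ) (hsum : T + T' = S + S') :
    ⌈T⌉ + ⌈T'⌉ ≤ ⌈S⌉ + ⌈S'⌉ + 1 := by
  have h1 : (⌈T⌉ : ℚ) < T + 1 := Int.ceil_lt_add_one T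
  have h2 : (⌈T'⌉ : ℚ) < T' + 1 := Int.ceil_lt_add_one T'
  have h3 : S + S' ≤ (⌈S + S'⌉ : ℚ) := Int.le_ceil _
  have h4 : ⌈S + S'⌉ ≤ ⌈S⌉ + ⌈S'⌉ := Int.ceil_add_le S S'
  have h5 : (⌈T⌉ : ℚ) + ⌈T'⌉ < (⌈S + S'⌉ : ℚ) + 2 := by linarith
  have h6 : ⌈T⌉ + ⌈T'⌉ < ⌈S + S'⌉ + 2 := by exact_mod_cast h5
  omega

/-- Theorem 5: the knapsack shipping problem is an Ameso(c3) optimization problem: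
the domain is an Ameso set, and the cost satisfies the Ameso(c3) inequality. -/
theorem knapsack_is_ameso
    (W w1 w2 w3 c1 c2 c3 : ℤ)
    (hW : 0 < W) (hw1 : 0 < w1) (hw2 : 0 < w2) (hw3 : 0 < w3)
    (hc1 : 0 < c1) (hc2 : 0 < c2) (hc3 : 0 < c3)
    (hw12 : w1 < w2) (hw23 : w2 < w3) (hc12 : c1 < c2) (hc23 : c2 < c3)
    (hr12 : (c1 : ℚ) / (w1 : ℚ) > (c2 : ℚ) / (w2 : ℚ))
    (hr23 : (c2 : ℚ) / (w2 : ℚ) > (c3 : ℚ) / (w3 : ℚ)) :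
    (∀ z1 z2 z1' z2' : ℤ, shipDom W w1 w2 z1 z2 → shipDom W w1 w2 z1' z2' →
      shipDom W w1 w2 (mceil z1 z1') (mceil z2 z2') ∧
      shipDom W w1 w2 (mfloor z1 z1') (mfloor z2 z2')) ∧
    (∀ z1 z2 z1' z2' : ℤ, shipDom W w1 w2 z1 z2 → shipDom W w1 w2 z1' z2' →
      shipCost W w1 w2 w3 c1 c2 c3 z1 z2 + shipCost W w1 w2 w3 c1 c2 c3 z1' z2' + c3 ≥
        shipCost W w1 w2 w3 c1 c2 c3 (mceil z1 z1') (mceil z2 z2') +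
        shipCost W w1 w2 w3 c1 c2 c3 (mfloor z1 z1') (mfloor z2 z2')) := by
  constructor
  · rintro z1 z2 z1' z2' ⟨h1, h2, h3, h4⟩ ⟨h1', h2', h3', h4'⟩
    refine ⟨⟨?_, ?_, ?_, ?_⟩, ⟨?_, ?_, ?_, ?_⟩⟩
    · rw [mceil_eq]; omega
    · rw [mceil_eq]; omega
    · exact dom_bound w1 W z1 z1' _ hw1 h3 h3' (by rw [mceil_eq]; omega)
    · exact dom_bound w2 W z2 z2' _ hw2 h4 h4' (by rw [mceil_eq]; omega)
    · rw [mfloor_eq]; omega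
    · rw [mfloor_eq]; omega
    · exact dom_bound w1 W z1 z1' _ hw1 h3 h3' (by rw [mfloor_eq]; omega)
    · exact dom_bound w2 W z2 z2' _ hw2 h4 h4' (by rw [mfloor_eq]; omega)
  · rintro z1 z2 z1' z2' _ _
    have e1 : mceil z1 z1' + mfloor z1 z1' = z1 + z1' := by
      rw [mceil_eq, mfloor_eq]; omega
    have e2 : mceil z2 z2' + mfloor z2 z2' = z2 + z2' := by
      rw [mceil_eq, mfloor_eq]; omega
    set a := mceil z1 z1'
    set b := mceil z2 z2'
    set fa := mfloor z1 z1'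
    set fb := mfloor z2 z2'
    have hw3q : (0 : ℚ) < (w3 : ℚ) := by exact_mod_cast hw3
    have hsum : ((W : ℚ) - w1 * a - w2 * b) / w3 + ((W : ℚ) - w1 * fa - w2 * fb) / w3
        = ((W : ℚ) - w1 * z1 - w2 * z2) / w3 + ((W : ℚ) - w1 * z1' - w2 * z2') / w3 := by
      have c1' : ((a : ℚ) + fa) = (z1 : ℚ) + z1' := by exact_mod_cast e1
      have c2' : ((b : ℚ) + fb) = (z2 : ℚ) + z2' := by exact_mod_cast e2
      rw [← add_div, ← add_div]
      congr 1
      linear_combination (-(w1 : ℚ)) * c1' - (w2 : ℚ) * c2'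
    have key := ceil_key _ _ _ _ hsum
    simp only [shipCost, ge_iff_le]
    nlinarith [key, e1, e2]
end

section
/- Let n and j be positive integers with j ≤ n, let D₁, …, Dₙ be nonempty subsets of ℤ each closed under taking ⌈(x+y)/2⌉ and ⌊(x+y)/2⌋ of any two of its elements, and let Dⁿ = D₁ × ⋯ × Dₙ ⊆ ℤⁿ. Let C ≥ 0 and let f : ℤⁿ → ℝ be bounded below on Dⁿ and satisfy f(x) + f(y) + C ≥ f(⌈(x+y)/2⌉) + f(⌊(x+y)/2⌋) for all x, y ∈ Dⁿ, where the ceiling and floor of (x+y)/2 are taken componentwise. Fix distinct indices i₁, …, i_j in {1,…,n}, let Δ = D_{i₁} × ⋯ × D_{i_j}, and define f* : Δ → ℝ by f*(x_{i₁},…,x_{i_j}) = inf { f(y) : y ∈ Dⁿ, y_{i_k} = x_{i_k} for k = 1,…,j }. Then (Δ, f*) is a j-dimensional Ameso(C) pair: Δ is closed under componentwise ⌈(u+v)/2⌉ and ⌊(u+v)/2⌋, f* is bounded below on Δ, and f*(u) + f*(v) + C ≥ f*(⌈(u+v)/2⌉) + f*(⌊(u+v)/2⌋) for all u, v ∈ Δ.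 -/
/-- Property 5: the conditional pair of an `n`-dimensional Ameso(C) pair on a product
domain `D₁ × ⋯ × Dₙ` is a `j`-dimensional Ameso(C) pair.  The `j` fixed coordinates are
given by an injection `ι : Fin j → Fin n`; the conditional function `fstar` is the
infimum of `f` over the fiber where the chosen coordinates are fixed. -/
theorem conditional_pair_is_ameso
    (n j : ℕ) (hn : 0 < n) (hj : 0 < j) (hjn : j ≤ n)
    (D : Fin n → Set ℤ)
    (hDne : ∀ i, (D i).Nonempty)
    (hDclosed : ∀ i, ∀ x ∈ D i, ∀ y ∈ D i, mceil x y ∈ D i ∧ mfloor x y ∈ D i)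
    (C : ℝ) (hC : 0 ≤ C)
    (f : (Fin n → ℤ) → ℝ)
    (B : ℝ) (hB : ∀ x : Fin n → ℤ, (∀ i, x i ∈ D i) → B ≤ f x)
    (hAmeso : ∀ x y : Fin n → ℤ, (∀ i, x i ∈ D i) → (∀ i, y i ∈ D i) →
      f x + f y + C ≥ f (fun i => mceil (x i) (y i)) + f (fun i => mfloor (x i) (y i)))
    (ι : Fin j → Fin n) (hι : Function.Injective ι)
    (fstar : (Fin j → ℤ) → ℝ)
    (hfstar : ∀ u : Fin j → ℤ,
      fstar u = sInf (f '' {y : Fin n → ℤ | (∀ i, y i ∈ D i) ∧ ∀ k, y (ι k) = u k})) :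
    (∀ u v : Fin j → ℤ, (∀ k, u k ∈ D (ι k)) → (∀ k, v k ∈ D (ι k)) →
      (∀ k, mceil (u k) (v k) ∈ D (ι k)) ∧ (∀ k, mfloor (u k) (v k) ∈ D (ι k))) ∧
    (∃ B' : ℝ, ∀ u : Fin j → ℤ, (∀ k, u k ∈ D (ι k)) → B' ≤ fstar u) ∧
    (∀ u v : Fin j → ℤ, (∀ k, u k ∈ D (ι k)) → (∀ k, v k ∈ D (ι k)) →
      fstar u + fstar v + C ≥
        fstar (fun k => mceil (u k) (v k)) + fstar (fun k => mfloor (u k) (v k))) := by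
  classical
  -- the fiber over u
  set S : (Fin j → ℤ) → Set (Fin n → ℤ) :=
    fun u => {y : Fin n → ℤ | (∀ i, y i ∈ D i) ∧ ∀ k, y (ι k) = u k} with hS
  -- fiber is nonempty when u is in the domain
  have hSne : ∀ u : Fin j → ℤ, (∀ k, u k ∈ D (ι k)) → (S u).Nonempty := by
    intro u hu
    refine ⟨fun i => if h : ∃ k, ι k = i then u h.choose else (hDne i).some, ?_, ?_⟩
    · intro i
      by_cases h : ∃ k, ι k = i
      · dsimp only; rw [dif_pos h]
        have h2 : D i = D (ι h.choose) := by rw [h.choose_spec]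
        rw [h2]; exact hu _
      · dsimp only; rw [dif_neg h]
        exact (hDne i).some_mem
    · intro k
      have h : ∃ k', ι k' = ι k := ⟨k, rfl⟩
      dsimp only; rw [dif_pos h]
      have : h.choose = k := hι h.choose_spec
      rw [this]
  -- B is a lower bound on the image
  have hlb : ∀ u : Fin j → ℤ, ∀ a ∈ f '' S u, B ≤ a := by
    rintro u a ⟨y, hy, rfl⟩
    exact hB y hy.1
  have hbdd : ∀ u : Fin j → ℤ, BddBelow (f '' S u) := fun u => ⟨B, hlb u⟩
  -- fstar u ≤ f y for y in fiber
  have hle : ∀ u : Fin j → ℤ, ∀ y ∈ S u, fstar u ≤ f y := by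
    intro u y hy
    rw [hfstar u]
    exact csInf_le (hbdd u) ⟨y, hy, rfl⟩
  -- closedness of the restricted domain
  have hclosed : ∀ u v : Fin j → ℤ, (∀ k, u k ∈ D (ι k)) → (∀ k, v k ∈ D (ι k)) →
      (∀ k, mceil (u k) (v k) ∈ D (ι k)) ∧ (∀ k, mfloor (u k) (v k) ∈ D (ι k)) := by
    intro u v hu hv
    exact ⟨fun k => (hDclosed (ι k) _ (hu k) _ (hv k)).1,
           fun k => (hDclosed (ι k) _ (hu k) _ (hv k)).2⟩
  refine ⟨hclosed, ⟨B, ?_⟩, ?_⟩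
  · intro u hu
    rw [hfstar u]
    exact le_csInf ((hSne u hu).image f) (hlb u)
  · intro u v hu hv
    have hcu := (hclosed u v hu hv).1
    have hfl := (hclosed u v hu hv).2
    -- key: for x ∈ S u, y ∈ S v, fstar c + fstar fl ≤ f x + f y + C
    have key : ∀ x ∈ S u, ∀ y ∈ S v,
        fstar (fun k => mceil (u k) (v k)) + fstar (fun k => mfloor (u k) (v k))
          ≤ f x + f y + C := by
      intro x hx y hy
      have hmx : (fun i => mceil (x i) (y i)) ∈ S (fun k => mceil (u k) (v k)) := by
        constructor
        · intro i; exact (hDclosed i _ (hx.1 i) _ (hy.1 i)).1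
        · intro k; simp only [hx.2 k, hy.2 k]
      have hmy : (fun i => mfloor (x i) (y i)) ∈ S (fun k => mfloor (u k) (v k)) := by
        constructor
        · intro i; exact (hDclosed i _ (hx.1 i) _ (hy.1 i)).2
        · intro k; simp only [hx.2 k, hy.2 k]
      have h1 := hle _ _ hmx
      have h2 := hle _ _ hmy
      have h3 := hAmeso x y hx.1 hy.1
      linarith
    -- conclude via two nested le_csInf
    rw [ge_iff_le, show fstar u + fstar v + C = (fstar u + C) + fstar v by ring]
    have step1 : ∀ x ∈ S u,
        fstar (fun k => mceil (u k) (v k)) + fstar (fun k => mfloor (u k) (v k))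
          ≤ (f x + C) + fstar v := by
      intro x hx
      have : fstar (fun k => mceil (u k) (v k)) + fstar (fun k => mfloor (u k) (v k))
          - (f x + C) ≤ fstar v := by
        rw [hfstar v]
        refine le_csInf ((hSne v hv).image f) ?_
        rintro b ⟨y, hy, rfl⟩
        have := key x hx y hy
        linarith
      linarith
    have : fstar (fun k => mceil (u k) (v k)) + fstar (fun k => mfloor (u k) (v k))
        - (C + fstar v) ≤ fstar u := by
      rw [hfstar u]
      refine le_csInf ((hSne u hu).image f) ?_
      rintro a ⟨x, hx, rfl⟩
      have := step1 x hx
      linarith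
    linarith
end

section
/- A finite subset M of ℤ with at least two elements is closed under taking ⌈(x+y)/2⌉ and ⌊(x+y)/2⌋ of any two of its elements if and only if M is an integer interval, i.e., there exist integers xs < xt such that M = {z ∈ ℤ : xs ≤ z ≤ xt}. -/
lemma mfloor_strict (a b : ℤ) (h : a + 2 ≤ b) : a < mfloor a b ∧ mfloor a b < b := by
  unfold mfloor
  constructor
  · have : (a : ℚ) + 1 ≤ ((a : ℚ) + (b : ℚ)) / 2 := by
      have : (a : ℚ) + 2 ≤ (b : ℚ) := by exact_mod_cast h
      linarith
    have := Int.le_floor.mpr (by push_cast; linarith : ((a + 1 : ℤ) : ℚ) ≤ ((a : ℚ) + (b : ℚ)) / 2)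
    omega
  · have hb : ((a : ℚ) + (b : ℚ)) / 2 ≤ (b : ℚ) - 1 := by
      have : (a : ℚ) + 2 ≤ (b : ℚ) := by exact_mod_cast h
      linarith
    have := Int.floor_le_floor (le_trans hb (by push_cast; linarith : ((b : ℚ) - 1) ≤ ((b - 1 : ℤ) : ℚ)))
    rw [Int.floor_intCast] at this
    omega

lemma mfloor_mem_Icc (xs xt x y : ℤ) (hx : x ∈ Finset.Icc xs xt) (hy : y ∈ Finset.Icc xs xt) :
    mfloor x y ∈ Finset.Icc xs xt := by
  simp only [Finset.mem_Icc] at *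
  obtain ⟨hx1, hx2⟩ := hx; obtain ⟨hy1, hy2⟩ := hy
  constructor
  · apply Int.le_floor.mpr
    have h1 : (xs : ℚ) ≤ x := by exact_mod_cast hx1
    have h2 : (xs : ℚ) ≤ y := by exact_mod_cast hy1
    linarith
  · have h1 : (x : ℚ) ≤ xt := by exact_mod_cast hx2
    have h2 : (y : ℚ) ≤ xt := by exact_mod_cast hy2
    have := Int.floor_le_floor (show ((x : ℚ) + (y : ℚ)) / 2 ≤ ((xt : ℤ) : ℚ) by push_cast; linarith)
    rw [Int.floor_intCast] at this
    exact this

lemma mceil_mem_Icc (xs xt x y : ℤ) (hx : x ∈ Finset.Icc xs xt) (hy : y ∈ Finset.Icc xs xt) :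
    mceil x y ∈ Finset.Icc xs xt := by
  unfold mceil
  simp only [Finset.mem_Icc] at *
  obtain ⟨hx1, hx2⟩ := hx; obtain ⟨hy1, hy2⟩ := hy
  constructor
  · have h1 : (xs : ℚ) ≤ x := by exact_mod_cast hx1
    have h2 : (xs : ℚ) ≤ y := by exact_mod_cast hy1
    have := Int.le_ceil_iff.mpr (show ((xs : ℤ) : ℚ) - 1 < ((x : ℚ) + (y : ℚ)) / 2 by push_cast; linarith)
    omega
  · apply Int.ceil_le.mpr
    have h1 : (x : ℚ) ≤ xt := by exact_mod_cast hx2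
    have h2 : (y : ℚ) ≤ xt := by exact_mod_cast hy2
    linarith

/-- Lemma 1: a finite subset of `ℤ` with at least two elements is a one-dimensional
Ameso set (closed under midpoint ceiling and floor) iff it is an integer interval. -/
theorem ameso_set_iff_interval (M : Finset ℤ) (hcard : 2 ≤ M.card) :
    (∀ x ∈ M, ∀ y ∈ M, mceil x y ∈ M ∧ mfloor x y ∈ M) ↔
    ∃ xs xt : ℤ, xs < xt ∧ M = Finset.Icc xs xt := by
  constructor
  · intro hclosed
    have hne : M.Nonempty := Finset.card_pos.mp (by omega)
    set xs := M.min' hne with hxs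
    set xt := M.max' hne with hxt
    have hlt : xs < xt := M.min'_lt_max'_of_card (by omega)
    refine ⟨xs, xt, hlt, ?_⟩
    apply Finset.eq_of_subset_of_card_le
    · intro m hm
      simp only [Finset.mem_Icc]
      exact ⟨M.min'_le m hm, M.le_max' m hm⟩
    · -- show card Icc ≤ card M; prove Icc ⊆ M
      apply Finset.card_le_card
      intro z hz
      by_contra hznot
      simp only [Finset.mem_Icc] at hz
      -- a = max of elements below z, b = min of elements above z
      have hAne : (M.filter (· < z)).Nonempty := by
        refine ⟨xs, Finset.mem_filter.mpr ⟨M.min'_mem hne, ?_⟩⟩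
        rcases lt_or_eq_of_le hz.1 with h | h
        · exact h
        · exact absurd (h ▸ M.min'_mem hne) hznot
      have hBne : (M.filter (z < ·)).Nonempty := by
        refine ⟨xt, Finset.mem_filter.mpr ⟨M.max'_mem hne, ?_⟩⟩
        rcases lt_or_eq_of_le hz.2 with h | h
        · exact h
        · exact absurd (h ▸ M.max'_mem hne) hznot
      set a := (M.filter (· < z)).max' hAne with ha
      set b := (M.filter (z < ·)).min' hBne with hb
      have haM : a ∈ M := (Finset.mem_filter.mp ((M.filter (· < z)).max'_mem hAne)).1
      have haz : a < z := (Finset.mem_filter.mp ((M.filter (· < z)).max'_mem hAne)).2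
      have hbM : b ∈ M := (Finset.mem_filter.mp ((M.filter (z < ·)).min'_mem hBne)).1
      have hbz : z < b := (Finset.mem_filter.mp ((M.filter (z < ·)).min'_mem hBne)).2
      have hab : a + 2 ≤ b := by omega
      obtain ⟨h1, h2⟩ := mfloor_strict a b hab
      have hfM : mfloor a b ∈ M := (hclosed a haM b hbM).2
      rcases lt_trichotomy (mfloor a b) z with h | h | h
      · have : mfloor a b ≤ a := (M.filter (· < z)).le_max' _ (Finset.mem_filter.mpr ⟨hfM, h⟩)
        omega
      · exact hznot (h ▸ hfM)
      · have : b ≤ mfloor a b := (M.filter (z < ·)).min'_le _ (Finset.mem_filter.mpr ⟨hfM, h⟩)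
        omega
  · rintro ⟨xs, xt, hlt, rfl⟩ x hx y hy
    exact ⟨mceil_mem_Icc xs xt x y hx hy, mfloor_mem_Icc xs xt x y hx hy⟩
end
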